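/- arXiv:1409.6242 — 2 statements merged into one kernel-verified Lean document; each statement's English description precedes it below -/
import Mathlib

section
/- Let a_z ∈ M_d(ℂ) be normal with an eigenvalue λ₁ ≠ 0 whose eigenspace is one-dimensional and such that |μ| < |λ₁| for every other eigenvalue μ of a_z; let P be the orthogonal projection onto the λ₁-eigenspace. Let U ∈ M_d(ℂ) be unitary with U·a_z·U† = a_z, let a_x ∈ M_d(ℂ) be arbitrary, and set a_y := U·a_x·U†. Then there exist C ≥ 0 and r ∈ [0,1) such that ‖λ₁^{−2m}·(a_z^m·a_x·a_z^m − a_z^m·a_y·a_z^m)‖ ≤ C·r^m for all m; in particular the renormalized operators ã_x^{(m)} := λ₁^{−2m} a_z^m a_x a_z^m and ã_y^{(m)} := λ₁^{−2m} a_z^m a_y a_z^m converge to the common limit P·a_x·P. -/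
open Matrix Filter

noncomputable section

attribute [local instance] Matrix.normedAddCommGroup

/-- `μ` is an eigenvalue of the matrix `a`. -/
def HasEigen {d : ℕ} (a : Matrix (Fin d) (Fin d) ℂ) (μ : ℂ) : Prop :=
  ∃ v : Fin d → ℂ, v ≠ 0 ∧ a.mulVec v = μ • v

open scoped NNReal ENNReal

lemma geom_of_specRadius_lt_one {A : Type*} [NormedRing A] [NormedAlgebra ℂ A]
    [CompleteSpace A] (a : A) (h : spectralRadius ℂ a < 1) :
    ∃ C : ℝ, 0 ≤ C ∧ ∃ r : ℝ, 0 < r ∧ r < 1 ∧ ∀ m : ℕ, ‖a ^ m‖ ≤ C * r ^ m := by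
  obtain ⟨s, hs1, hs2⟩ := ENNReal.lt_iff_exists_nnreal_btwn.mp h
  have hs0 : 0 < s := by
    rcases eq_zero_or_pos s with h0 | h0
    · subst h0; simp at hs1
    · exact h0
  have hgel := spectrum.pow_nnnorm_pow_one_div_tendsto_nhds_spectralRadius a
  have hev : ∀ᶠ n : ℕ in atTop, ((‖a ^ n‖₊ : ℝ≥0∞) ^ (1 / (n:ℝ))) < (s : ℝ≥0∞) :=
    hgel.eventually_lt_const hs1
  obtain ⟨N, hN⟩ := hev.exists_forall_of_atTop
  have key : ∀ n, N ≤ n → 1 ≤ n → ‖a ^ n‖₊ ≤ s ^ n := by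
    intro n h1 h2
    have := hN n h1
    have hn0 : (n : ℝ) ≠ 0 := by positivity
    have h3 : (((‖a ^ n‖₊ : ℝ≥0∞) ^ (1 / (n:ℝ))) ^ (n : ℝ)) ≤ ((s : ℝ≥0∞)) ^ (n:ℝ) :=
      ENNReal.rpow_le_rpow this.le (by positivity)
    rw [← ENNReal.rpow_mul, one_div, inv_mul_cancel₀ hn0, ENNReal.rpow_one] at h3
    rw [ENNReal.rpow_natCast, ← ENNReal.coe_pow] at h3
    exact_mod_cast h3
  set r : ℝ := (s : ℝ) with hr
  have hr0 : 0 < r := hs0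
  have hr1 : r < 1 := by exact_mod_cast hs2
  set N' := max N 1 with hN'
  refine ⟨1 + ∑ n ∈ Finset.range N', ‖a ^ n‖ / r ^ n, by positivity, r, hr0, hr1, ?_⟩
  intro m
  rcases lt_or_ge m N' with hm | hm
  · have h4 : ‖a ^ m‖ / r ^ m ≤ ∑ n ∈ Finset.range N', ‖a ^ n‖ / r ^ n :=
      Finset.single_le_sum (f := fun n => ‖a ^ n‖ / r ^ n) (fun n _ => by positivity)
        (Finset.mem_range.mpr hm)
    have h5 : ‖a ^ m‖ = (‖a ^ m‖ / r ^ m) * r ^ m := by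
      field_simp
    rw [h5]
    have : (0:ℝ) < r ^ m := by positivity
    nlinarith [norm_nonneg (a ^ m), pow_nonneg hr0.le m]
  · have h1 : N ≤ m := le_trans (le_max_left _ _) hm
    have h2 : 1 ≤ m := le_trans (le_max_right _ _) hm
    have := key m h1 h2
    have h6 : ‖a ^ m‖ ≤ r ^ m := by
      have : (‖a ^ m‖₊ : ℝ) ≤ ((s ^ m : ℝ≥0) : ℝ) := by exact_mod_cast this
      simpa [hr] using this
    have h7 : (0:ℝ) ≤ ∑ n ∈ Finset.range N', ‖a ^ n‖ / r ^ n := by positivity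
    nlinarith [pow_nonneg hr0.le m]


lemma mem_spectrum_iff_eigen {d : ℕ} (a : Matrix (Fin d) (Fin d) ℂ) (μ : ℂ) :
    μ ∈ spectrum ℂ a ↔ HasEigen a μ := by
  rw [spectrum.mem_iff]
  rw [Matrix.isUnit_iff_isUnit_det, isUnit_iff_ne_zero, not_not,
    ← Matrix.exists_mulVec_eq_zero_iff]
  constructor
  · rintro ⟨v, hv, h⟩
    refine ⟨v, hv, ?_⟩
    have := h
    rw [Matrix.sub_mulVec] at this
    have h2 : (algebraMap ℂ (Matrix (Fin d) (Fin d) ℂ) μ).mulVec v = μ • v := by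
      rw [Algebra.algebraMap_eq_smul_one]
      simp [Matrix.smul_mulVec, Matrix.one_mulVec]
    rw [h2] at this
    exact (sub_eq_zero.mp this).symm
  · rintro ⟨v, hv, h⟩
    refine ⟨v, hv, ?_⟩
    rw [Matrix.sub_mulVec, h, Algebra.algebraMap_eq_smul_one]
    simp [Matrix.smul_mulVec, Matrix.one_mulVec]

lemma matrix_geom {d : ℕ} (a : Matrix (Fin d) (Fin d) ℂ)
    (h : ∀ μ : ℂ, HasEigen a μ → ‖μ‖ < 1) :
    ∃ C : ℝ, 0 ≤ C ∧ ∃ r : ℝ, 0 ≤ r ∧ r < 1 ∧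
      ∀ (m : ℕ) (i j : Fin d), ‖(a ^ m) i j‖ ≤ C * r ^ m := by
  rcases Nat.eq_zero_or_pos d with hd | hd
  · subst hd
    exact ⟨0, le_rfl, 0, le_rfl, one_pos, fun m i j => i.elim0⟩
  haveI : Nonempty (Fin d) := ⟨⟨0, hd⟩⟩
  letI instN : NormedRing (Matrix (Fin d) (Fin d) ℂ) := Matrix.linftyOpNormedRing
  letI instA : NormedAlgebra ℂ (Matrix (Fin d) (Fin d) ℂ) := Matrix.linftyOpNormedAlgebra
  haveI : @CompleteSpace (Matrix (Fin d) (Fin d) ℂ) instN.toUniformSpace :=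
    @FiniteDimensional.complete ℂ _ _ _ _ instN.toUniformSpace (by infer_instance) (by infer_instance) _
      (by infer_instance) (by infer_instance)
  have hsp : spectralRadius ℂ a < 1 := by
    have h1 : ∀ z ∈ spectrum ℂ a, ‖z‖₊ < (1 : ℝ≥0) := by
      intro z hz
      have := h z ((mem_spectrum_iff_eigen a z).mp hz)
      exact_mod_cast this
    simpa using spectrum.spectralRadius_lt_of_forall_lt a h1
  obtain ⟨C, hC, r, hr0, hr1, hbound⟩ := geom_of_specRadius_lt_one a hsp
  refine ⟨C, hC, r, hr0.le, hr1, fun m i j => ?_⟩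
  refine le_trans ?_ (hbound m)
  -- entry ≤ linfty op norm
  have h2 : ‖(a ^ m) i j‖₊ ≤ ‖a ^ m‖₊ := by
    rw [Matrix.linfty_opNNNorm_def]
    refine le_trans ?_ (Finset.le_sup (Finset.mem_univ i))
    exact Finset.single_le_sum (f := fun j' => ‖(a ^ m) i j'‖₊) (fun _ _ => zero_le)
      (Finset.mem_univ j)
  exact_mod_cast h2

lemma mulVec_ext' {d : ℕ} {A B : Matrix (Fin d) (Fin d) ℂ}
    (h : ∀ v, A.mulVec v = B.mulVec v) : A = B := by
  ext i j
  simpa using congrFun (h (Pi.single j 1)) i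

lemma normal_adjoint_eigen {d : ℕ} (az : Matrix (Fin d) (Fin d) ℂ)
    (hn : IsStarNormal az) (lam : ℂ) (w : Fin d → ℂ)
    (hw : az.mulVec w = lam • w) :
    azᴴ.mulVec w = (starRingEnd ℂ lam) • w := by
  have comm : azᴴ * az = az * azᴴ := by
    have := hn.star_comm_self
    rwa [Matrix.star_eq_conjTranspose] at this
  set n : Matrix (Fin d) (Fin d) ℂ := az - lam • 1 with hn_def
  have hnH : nᴴ = azᴴ - (starRingEnd ℂ lam) • 1 := by
    simp [hn_def, Matrix.conjTranspose_smul, Matrix.conjTranspose_one]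
  have hnn : n * nᴴ = nᴴ * n := by
    rw [hnH, hn_def]
    simp only [mul_sub, sub_mul, Matrix.smul_mul, Matrix.mul_smul, Matrix.one_mul,
      Matrix.mul_one, smul_smul, comm, mul_comm]
    abel
  have hw' : n.mulVec w = 0 := by
    rw [hn_def, Matrix.sub_mulVec, hw, Matrix.smul_mulVec, Matrix.one_mulVec, sub_self]
  have hzero : nᴴ.mulVec w = 0 := by
    have hdot : dotProduct (star (nᴴ.mulVec w)) (nᴴ.mulVec w) = 0 := by
      rw [Matrix.star_mulVec, Matrix.conjTranspose_conjTranspose,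
        ← dotProduct_mulVec, Matrix.mulVec_mulVec, hnn,
        ← Matrix.mulVec_mulVec, hw', Matrix.mulVec_zero, dotProduct_zero]
    open scoped ComplexOrder in
    exact dotProduct_star_self_eq_zero.mp hdot
  have := hzero
  rw [hnH, Matrix.sub_mulVec, Matrix.smul_mulVec, Matrix.one_mulVec] at this
  exact sub_eq_zero.mp this

lemma entry_mul_mul_le {d : ℕ} (A B C : Matrix (Fin d) (Fin d) ℂ) (i j : Fin d) :
    ‖(A * B * C) i j‖ ≤
      ∑ k, ∑ l, ‖A i k‖ * ‖B k l‖ * ‖C l j‖ := by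
  rw [Matrix.mul_apply]
  refine le_trans (norm_sum_le _ _) ?_
  rw [Finset.sum_comm]
  refine Finset.sum_le_sum fun l _ => ?_
  rw [norm_mul, Matrix.mul_apply]
  calc ‖∑ k, A i k * B k l‖ * ‖C l j‖
      ≤ (∑ k, ‖A i k * B k l‖) * ‖C l j‖ := by
        exact mul_le_mul_of_nonneg_right (norm_sum_le _ _) (norm_nonneg _)
    _ = ∑ k, ‖A i k‖ * ‖B k l‖ * ‖C l j‖ := by
        rw [Finset.sum_mul]; simp [norm_mul]

set_option maxHeartbeats 1600000 in
/-- Under z-buffering, if `az` is normal with a nondegenerate dominant eigenvalue `lam` ≠ 0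
    (with rank-one orthogonal spectral projection `P`), `U` is unitary with `U·az·U† = az`,
    and `ay = U·ax·U†`, then the renormalized operators
    `ã_x^{(m)} = lam⁻²ᵐ azᵐ ax azᵐ` and `ã_y^{(m)} = lam⁻²ᵐ azᵐ ay azᵐ`
    become exponentially close and converge to the common limit `P·ax·P`. -/
theorem buffering_common_limit {d : ℕ}
    (az P U ax : Matrix (Fin d) (Fin d) ℂ) (lam : ℂ)
    (hnormal : IsStarNormal az)
    (hlam0 : lam ≠ 0) (hlam : HasEigen az lam)
    (hdom : ∀ μ : ℂ, HasEigen az μ → μ ≠ lam → ‖μ‖ < ‖lam‖)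
    (hP2 : P * P = P) (hPH : Pᴴ = P) (hrank : P.rank = 1)
    (hPrange : ∀ v : Fin d → ℂ, az.mulVec v = lam • v ↔ P.mulVec v = v)
    (hU : Uᴴ * U = 1) (hU' : U * Uᴴ = 1)
    (hUaz : U * az * Uᴴ = az)
    (ay : Matrix (Fin d) (Fin d) ℂ) (hay : ay = U * ax * Uᴴ) :
    (∃ C : ℝ, 0 ≤ C ∧ ∃ r : ℝ, 0 ≤ r ∧ r < 1 ∧
        ∀ m : ℕ, ‖(lam ^ (2 * m))⁻¹ •
            (az ^ m * ax * az ^ m - az ^ m * ay * az ^ m)‖ ≤ C * r ^ m)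
    ∧ Tendsto (fun m : ℕ => (lam ^ (2 * m))⁻¹ • (az ^ m * ax * az ^ m)) atTop
        (nhds (P * ax * P))
    ∧ Tendsto (fun m : ℕ => (lam ^ (2 * m))⁻¹ • (az ^ m * ay * az ^ m)) atTop
        (nhds (P * ax * P)) := by
  -- ### basic identities
  have hAzP : az * P = lam • P := mulVec_ext' fun v => by
    have h1 : P.mulVec (P.mulVec v) = P.mulVec v := by
      rw [Matrix.mulVec_mulVec, hP2]
    have h2 := (hPrange (P.mulVec v)).mpr h1
    rw [← Matrix.mulVec_mulVec, h2, Matrix.smul_mulVec]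
  have hAzHP : azᴴ * P = (starRingEnd ℂ lam) • P := mulVec_ext' fun v => by
    have h1 : P.mulVec (P.mulVec v) = P.mulVec v := by
      rw [Matrix.mulVec_mulVec, hP2]
    have h2 := (hPrange (P.mulVec v)).mpr h1
    rw [← Matrix.mulVec_mulVec, normal_adjoint_eigen az hnormal lam _ h2,
      Matrix.smul_mulVec]
  have hPAz : P * az = lam • P := by
    have h := congrArg Matrix.conjTranspose hAzHP
    rw [Matrix.conjTranspose_mul, Matrix.conjTranspose_conjTranspose, hPH,
      Matrix.conjTranspose_smul, hPH] at h
    simpa [Complex.conj_conj] using h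
  -- ### the error operator E
  set E : Matrix (Fin d) (Fin d) ℂ := lam⁻¹ • az - P with hE_def
  have hPE : P * E = 0 := by
    rw [hE_def, mul_sub, Matrix.mul_smul, hPAz, smul_smul, inv_mul_cancel₀ hlam0,
      one_smul, hP2, sub_self]
  have hEP : E * P = 0 := by
    rw [hE_def, sub_mul, Matrix.smul_mul, hAzP, smul_smul, inv_mul_cancel₀ hlam0,
      one_smul, hP2, sub_self]
  have hA : lam⁻¹ • az = P + E := by rw [hE_def]; abel
  have hApow : ∀ m : ℕ, 1 ≤ m → (lam⁻¹ • az) ^ m = P + E ^ m := by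
    intro m hm
    induction m with
    | zero => omega
    | succ k ih =>
      rcases Nat.eq_zero_or_pos k with hk | hk
      · subst hk; simpa using hA
      · rw [pow_succ, ih hk, hA, add_mul, mul_add, mul_add, hP2, hPE,
          ← pow_succ]
        have hEkP : E ^ k * P = 0 := by
          obtain ⟨k', rfl⟩ := Nat.exists_eq_succ_of_ne_zero (Nat.pos_iff_ne_zero.mp hk)
          rw [pow_succ, mul_assoc, hEP, mul_zero]
        rw [hEkP]
        abel
  -- ### eigenvalues of E are < 1 in modulus
  have hEeig : ∀ μ : ℂ, HasEigen E μ → ‖μ‖ < 1 := by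
    rintro μ ⟨v, hv, hEv⟩
    have hPEv : μ • P.mulVec v = 0 := by
      have h0 : (P * E).mulVec v = 0 := by rw [hPE, Matrix.zero_mulVec]
      rw [← Matrix.mulVec_mulVec, hEv, Matrix.mulVec_smul] at h0
      exact h0
    by_cases hμ : μ = 0
    · simp [hμ]
    · have hPv0 : P.mulVec v = 0 := by
        rcases smul_eq_zero.mp hPEv with h | h
        · exact absurd h hμ
        · exact h
      have hazv : az.mulVec v = (lam * μ) • v := by
        have h1 : E.mulVec v = lam⁻¹ • az.mulVec v - P.mulVec v := by
          rw [hE_def, Matrix.sub_mulVec, Matrix.smul_mulVec]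
        rw [hEv, hPv0, sub_zero] at h1
        have h2 : lam • μ • v = lam • lam⁻¹ • az.mulVec v := by rw [← h1]
        rw [smul_smul, smul_smul, mul_inv_cancel₀ hlam0, one_smul] at h2
        exact h2.symm
      have hne : lam * μ ≠ lam := by
        intro hcontra
        have hμ1 : μ = 1 := mul_left_cancel₀ hlam0 (by rw [hcontra, mul_one])
        rw [hμ1, mul_one] at hazv
        have := (hPrange v).mp hazv
        rw [hPv0] at this
        exact hv this.symm
      have := hdom (lam * μ) ⟨v, hv, hazv⟩ hne
      rw [norm_mul] at this
      have hlampos : 0 < ‖lam‖ := norm_pos_iff.mpr hlam0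
      have h1 : ‖lam‖ * ‖μ‖ < ‖lam‖ * 1 := by
        rw [mul_one]; exact this
      exact (mul_lt_mul_iff_right₀ hlampos).mp h1
  obtain ⟨C, hC0, r, hr0, hr1, hEm⟩ := matrix_geom E hEeig
  -- ### U commutes with az, and with P
  have hUcomm : U * az = az * U := by
    calc U * az = U * az * (Uᴴ * U) := by rw [hU, mul_one]
    _ = (U * az * Uᴴ) * U := by rw [← mul_assoc]
    _ = az * U := by rw [hUaz]
  have hUHcomm : Uᴴ * az = az * Uᴴ := by
    calc Uᴴ * az = Uᴴ * az * (U * Uᴴ) := by rw [hU', mul_one]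
    _ = Uᴴ * (az * U) * Uᴴ := by simp only [mul_assoc]
    _ = Uᴴ * (U * az) * Uᴴ := by rw [← hUcomm]
    _ = (Uᴴ * U) * az * Uᴴ := by simp only [mul_assoc]
    _ = az * Uᴴ := by rw [hU, one_mul]
  have hfix : ∀ (V : Matrix (Fin d) (Fin d) ℂ), V * az = az * V →
      ∀ w, P.mulVec w = w → P.mulVec (V.mulVec w) = V.mulVec w := by
    intro V hV w hw
    have haz : az.mulVec w = lam • w := (hPrange w).mpr hw
    have h1 : az.mulVec (V.mulVec w) = lam • V.mulVec w := by
      rw [Matrix.mulVec_mulVec, ← hV, ← Matrix.mulVec_mulVec, haz, Matrix.mulVec_smul]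
    exact (hPrange _).mp h1
  -- ### rank-one structure
  obtain ⟨v₀, hv₀, hv₀eig⟩ := hlam
  have hv₀P : P.mulVec v₀ = v₀ := (hPrange v₀).mp hv₀eig
  have hspan : ∀ w, P.mulVec w = w → ∃ s : ℂ, w = s • v₀ := by
    intro w hw
    set W := LinearMap.range P.mulVecLin with hW
    have hv₀W : v₀ ∈ W := ⟨v₀, by simpa [Matrix.mulVecLin_apply] using hv₀P⟩
    have hwW : w ∈ W := ⟨w, by simpa [Matrix.mulVecLin_apply] using hw⟩
    have hv₀ne : (⟨v₀, hv₀W⟩ : W) ≠ 0 := by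
      intro h; exact hv₀ (by simpa [Submodule.mk_eq_zero] using h)
    have hrk : Module.finrank ℂ W = 1 := hrank
    obtain ⟨c, hc⟩ := (finrank_eq_one_iff_of_nonzero' (⟨v₀, hv₀W⟩ : W) hv₀ne).mp hrk ⟨w, hwW⟩
    exact ⟨c, by simpa using (congrArg Subtype.val hc).symm⟩
  obtain ⟨c, hc⟩ := hspan _ (hfix U hUcomm v₀ hv₀P)
  have hc0 : c ≠ 0 := by
    intro h
    rw [h, zero_smul] at hc
    apply hv₀
    have h1 : (Uᴴ * U).mulVec v₀ = Uᴴ.mulVec (U.mulVec v₀) :=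
      (Matrix.mulVec_mulVec v₀ Uᴴ U).symm
    rw [hU, Matrix.one_mulVec, hc, Matrix.mulVec_zero] at h1
    exact h1
  have hUfixw : ∀ w, P.mulVec w = w → U.mulVec w = c • w := by
    intro w hw
    obtain ⟨s, rfl⟩ := hspan w hw
    rw [Matrix.mulVec_smul, hc, smul_smul, smul_smul, mul_comm]
  have hUHfixw : ∀ w, P.mulVec w = w → Uᴴ.mulVec w = c⁻¹ • w := by
    intro w hw
    have h1 : Uᴴ.mulVec (U.mulVec w) = w := by
      rw [Matrix.mulVec_mulVec, hU, Matrix.one_mulVec]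
    rw [hUfixw w hw, Matrix.mulVec_smul] at h1
    have h2 : Uᴴ.mulVec w = c⁻¹ • (c • Uᴴ.mulVec w) := by
      rw [smul_smul, inv_mul_cancel₀ hc0, one_smul]
    rw [h2, h1]
  have hPUHP : P * Uᴴ * P = Uᴴ * P := mulVec_ext' fun v => by
    have h1 : P.mulVec (P.mulVec v) = P.mulVec v := by rw [Matrix.mulVec_mulVec, hP2]
    have h2 := hfix Uᴴ hUHcomm (P.mulVec v) h1
    simp only [← Matrix.mulVec_mulVec]
    exact h2
  have hPUP : P * U * P = U * P := mulVec_ext' fun v => by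
    have h1 : P.mulVec (P.mulVec v) = P.mulVec v := by rw [Matrix.mulVec_mulVec, hP2]
    have h2 := hfix U hUcomm (P.mulVec v) h1
    simp only [← Matrix.mulVec_mulVec]
    exact h2
  have hPU : P * U = U * P := by
    have h := congrArg Matrix.conjTranspose hPUHP
    rw [Matrix.conjTranspose_mul, Matrix.conjTranspose_mul, hPH,
      Matrix.conjTranspose_conjTranspose, Matrix.conjTranspose_mul, hPH,
      Matrix.conjTranspose_conjTranspose] at h
    -- h : P * (U * P) = P * U  (up to assoc)
    rw [← mul_assoc] at h
    rw [← h]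
    exact hPUP
  -- ### P ay P = P ax P
  have hPxy : P * ay * P = P * ax * P := by
    rw [hay]
    apply mulVec_ext'
    intro v
    simp only [← Matrix.mulVec_mulVec]
    have hPPv : P.mulVec (P.mulVec v) = P.mulVec v := by rw [Matrix.mulVec_mulVec, hP2]
    rw [hUHfixw (P.mulVec v) hPPv, Matrix.mulVec_smul, Matrix.mulVec_smul,
      Matrix.mulVec_smul]
    have hswap : P.mulVec (U.mulVec (ax.mulVec (P.mulVec v)))
        = U.mulVec (P.mulVec (ax.mulVec (P.mulVec v))) := by
      simp only [Matrix.mulVec_mulVec, ← mul_assoc]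
      rw [hPU]
    rw [hswap, hUfixw _ (by rw [Matrix.mulVec_mulVec, hP2]), smul_smul,
      inv_mul_cancel₀ hc0, one_smul]
  -- ### scaling identity
  have hscale : ∀ (m : ℕ) (X : Matrix (Fin d) (Fin d) ℂ),
      (lam ^ (2 * m))⁻¹ • (az ^ m * X * az ^ m) = (lam⁻¹ • az) ^ m * X * (lam⁻¹ • az) ^ m := by
    intro m X
    simp only [smul_pow, Matrix.smul_mul, Matrix.mul_smul, smul_smul]
    congr 1
    rw [← pow_add, ← two_mul, inv_pow]
  -- ### quantitative bound for one X
  have hXbound : ∀ X : Matrix (Fin d) (Fin d) ℂ, ∃ D : ℝ, 0 ≤ D ∧ ∀ m : ℕ, 1 ≤ m →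
      ‖(lam⁻¹ • az) ^ m * X * (lam⁻¹ • az) ^ m - P * X * P‖ ≤ D * r ^ m := by
    intro X
    set nP := ‖P‖ with hnP
    set nX := ‖X‖ with hnX
    have hnP0 : 0 ≤ nP := norm_nonneg _
    have hnX0 : 0 ≤ nX := norm_nonneg _
    refine ⟨(d:ℝ)^2 * (nP * nX * C) + (d:ℝ)^2 * (C * nX * nP) + (d:ℝ)^2 * (C * nX * C),
      by positivity, fun m hm => ?_⟩
    have hEent : ∀ i j : Fin d, ‖(E ^ m) i j‖ ≤ C * r ^ m := by
      intro i j
      have := hEm m i j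
      exact this
    have hiden : (lam⁻¹ • az) ^ m * X * (lam⁻¹ • az) ^ m - P * X * P
        = P * X * E ^ m + E ^ m * X * P + E ^ m * X * E ^ m := by
      rw [hApow m hm]
      noncomm_ring
    rw [hiden]
    have hrm0 : (0:ℝ) ≤ r ^ m := pow_nonneg hr0 m
    have hrm1 : r ^ m ≤ 1 := pow_le_one₀ hr0 hr1.le
    refine (Matrix.norm_le_iff (by positivity)).mpr fun i j => ?_
    have htri : ‖(P * X * E ^ m + E ^ m * X * P + E ^ m * X * E ^ m) i j‖
        ≤ ‖(P * X * E ^ m) i j‖ + ‖(E ^ m * X * P) i j‖ + ‖(E ^ m * X * E ^ m) i j‖ := by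
      simp only [Matrix.add_apply]
      exact le_trans (norm_add_le _ _) (by gcongr; exact norm_add_le _ _)
    refine le_trans htri ?_
    have hsum : ∀ (c' : ℝ), 0 ≤ c' → ∀ f : Fin d → Fin d → ℝ, (∀ k l, f k l ≤ c') →
        ∑ k, ∑ l, f k l ≤ (d:ℝ)^2 * c' := by
      intro c' hc' f hf
      calc ∑ k, ∑ l, f k l ≤ ∑ k : Fin d, ∑ l : Fin d, c' :=
            Finset.sum_le_sum fun k _ => Finset.sum_le_sum fun l _ => hf k l
      _ = (d:ℝ)^2 * c' := by
          simp [Finset.sum_const, Fintype.card_fin]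
          ring
    have hb1 : ‖(P * X * E ^ m) i j‖ ≤ (d:ℝ)^2 * (nP * nX * (C * r ^ m)) := by
      refine le_trans (entry_mul_mul_le P X (E ^ m) i j) ?_
      refine hsum _ (by positivity) _ fun k l => ?_
      have e1 : ‖P i k‖ ≤ nP := Matrix.norm_entry_le_entrywise_sup_norm P
      have e2 : ‖X k l‖ ≤ nX := Matrix.norm_entry_le_entrywise_sup_norm X
      have e3 := hEent l j
      exact mul_le_mul (mul_le_mul e1 e2 (norm_nonneg _) hnP0) e3 (norm_nonneg _)
        (mul_nonneg hnP0 hnX0)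
    have hb2 : ‖(E ^ m * X * P) i j‖ ≤ (d:ℝ)^2 * ((C * r ^ m) * nX * nP) := by
      refine le_trans (entry_mul_mul_le (E ^ m) X P i j) ?_
      refine hsum _ (by positivity) _ fun k l => ?_
      have e1 := hEent i k
      have e2 : ‖X k l‖ ≤ nX := Matrix.norm_entry_le_entrywise_sup_norm X
      have e3 : ‖P l j‖ ≤ nP := Matrix.norm_entry_le_entrywise_sup_norm P
      exact mul_le_mul (mul_le_mul e1 e2 (norm_nonneg _) (by positivity)) e3 (norm_nonneg _)
        (by positivity)
    have hb3 : ‖(E ^ m * X * E ^ m) i j‖ ≤ (d:ℝ)^2 * ((C * r ^ m) * nX * (C * r ^ m)) := by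
      refine le_trans (entry_mul_mul_le (E ^ m) X (E ^ m) i j) ?_
      refine hsum _ (by positivity) _ fun k l => ?_
      have e1 := hEent i k
      have e2 : ‖X k l‖ ≤ nX := Matrix.norm_entry_le_entrywise_sup_norm X
      have e3 := hEent l j
      exact mul_le_mul (mul_le_mul e1 e2 (norm_nonneg _) (by positivity)) e3 (norm_nonneg _)
        (by positivity)
    have hq : (C * r ^ m) * nX * (C * r ^ m) ≤ C * nX * C * r ^ m := by
      have h5 : (C * nX * C * r ^ m) * r ^ m ≤ (C * nX * C * r ^ m) * 1 :=
        mul_le_mul_of_nonneg_left hrm1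
          (mul_nonneg (mul_nonneg (mul_nonneg hC0 hnX0) hC0) hrm0)
      nlinarith [h5]
    calc ‖(P * X * E ^ m) i j‖ + ‖(E ^ m * X * P) i j‖ + ‖(E ^ m * X * E ^ m) i j‖
        ≤ (d:ℝ)^2 * (nP * nX * (C * r ^ m)) + (d:ℝ)^2 * ((C * r ^ m) * nX * nP)
          + (d:ℝ)^2 * ((C * r ^ m) * nX * (C * r ^ m)) := by
          gcongr
      _ ≤ ((d:ℝ)^2 * (nP * nX * C) + (d:ℝ)^2 * (C * nX * nP) + (d:ℝ)^2 * (C * nX * C)) * r ^ m := by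
          have hd2 : (0:ℝ) ≤ (d:ℝ)^2 := by positivity
          nlinarith [mul_le_mul_of_nonneg_left hq hd2]
  obtain ⟨Dx, hDx0, hDx⟩ := hXbound ax
  obtain ⟨Dy, hDy0, hDy⟩ := hXbound ay
  -- ### part 1
  have hdiff : ∀ m : ℕ, 1 ≤ m →
      ‖(lam ^ (2 * m))⁻¹ • (az ^ m * ax * az ^ m - az ^ m * ay * az ^ m)‖
        ≤ (Dx + Dy) * r ^ m := by
    intro m hm
    have hsplit : (lam ^ (2 * m))⁻¹ • (az ^ m * ax * az ^ m - az ^ m * ay * az ^ m)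
        = ((lam⁻¹ • az) ^ m * ax * (lam⁻¹ • az) ^ m - P * ax * P)
          - ((lam⁻¹ • az) ^ m * ay * (lam⁻¹ • az) ^ m - P * ay * P) := by
      rw [smul_sub, hscale m ax, hscale m ay, hPxy]
      abel
    rw [hsplit]
    refine le_trans (norm_sub_le _ _) ?_
    calc ‖(lam⁻¹ • az) ^ m * ax * (lam⁻¹ • az) ^ m - P * ax * P‖
          + ‖(lam⁻¹ • az) ^ m * ay * (lam⁻¹ • az) ^ m - P * ay * P‖
        ≤ Dx * r ^ m + Dy * r ^ m := add_le_add (hDx m hm) (hDy m hm)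
      _ = (Dx + Dy) * r ^ m := by ring
  have htends : ∀ (X : Matrix (Fin d) (Fin d) ℂ) (D : ℝ),
      (∀ m : ℕ, 1 ≤ m → ‖(lam⁻¹ • az) ^ m * X * (lam⁻¹ • az) ^ m - P * X * P‖ ≤ D * r ^ m) →
      P * X * P = P * ax * P →
      Tendsto (fun m : ℕ => (lam ^ (2 * m))⁻¹ • (az ^ m * X * az ^ m)) atTop
        (nhds (P * ax * P)) := by
    intro X D hD hPX
    rw [← tendsto_sub_nhds_zero_iff]
    have hg : Tendsto (fun m : ℕ => D * r ^ m) atTop (nhds 0) := by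
      simpa using (tendsto_pow_atTop_nhds_zero_of_lt_one hr0 hr1).const_mul D
    refine squeeze_zero_norm' ?_ hg
    filter_upwards [eventually_ge_atTop 1] with m hm
    rw [hscale m X, ← hPX]
    exact hD m hm
  refine ⟨⟨max (Dx + Dy) ‖ax - ay‖, le_max_of_le_right (norm_nonneg _), r, hr0, hr1, ?_⟩,
    htends ax Dx hDx rfl, htends ay Dy hDy hPxy⟩
  intro m
  rcases Nat.eq_zero_or_pos m with hm | hm
  · subst hm
    simp only [Nat.mul_zero, pow_zero, inv_one, one_smul, one_mul, mul_one]
    exact le_max_right _ _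
  · refine le_trans (hdiff m hm) ?_
    have : (0:ℝ) ≤ r ^ m := pow_nonneg hr0 m
    exact mul_le_mul_of_nonneg_right (le_max_left _ _) this

end
end

section
/- Let a_z ∈ M_d(ℂ) be normal with an eigenvalue λ₁ ≠ 0 whose eigenspace is one-dimensional and such that |μ| < |λ₁| for every other eigenvalue μ; let P be the orthogonal projection onto the λ₁-eigenspace. Let U ∈ M_d(ℂ) be unitary with U·a_z·U† = a_z, let a_x ∈ M_d(ℂ) satisfy P·a_x·P ≠ 0, and set a_y := U·a_x·U†. Then for every Θ ∈ ℝ, the renormalized measurement operator λ₁^{−2m}·[cos(Θ/2)·(σ_x ⊗ (a_z^m a_x a_z^m)) − sin(Θ/2)·(σ_y ⊗ (a_z^m a_y a_z^m))] converges as m → ∞ to the nonzero product operator U_Θ ⊗ (P·a_x·P), where U_Θ = σ_x·(cos(Θ/2)·I₂ − i sin(Θ/2)·σ_z). -/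
open Matrix Filter Kronecker
open scoped NNReal ENNReal

noncomputable section

attribute [local instance] Matrix.normedAddCommGroup

/-- Pauli matrix σ_x. -/
def σx : Matrix (Fin 2) (Fin 2) ℂ := !![0, 1; 1, 0]
/-- Pauli matrix σ_y. -/
def σy : Matrix (Fin 2) (Fin 2) ℂ := !![0, -Complex.I; Complex.I, 0]
/-- Pauli matrix σ_z. -/
def σz : Matrix (Fin 2) (Fin 2) ℂ := !![1, 0; 0, -1]

/-- `U_Θ = σ_x·(cos(Θ/2)·I₂ − i sin(Θ/2)·σ_z)`. -/
def UΘ (Θ : ℝ) : Matrix (Fin 2) (Fin 2) ℂ :=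
  σx * ((Real.cos (Θ / 2) : ℂ) • (1 : Matrix (Fin 2) (Fin 2) ℂ)
    - (Complex.I * (Real.sin (Θ / 2) : ℂ)) • σz)

/-- Two matrices with the same action on all vectors are equal. -/
lemma mat_ext' {d : ℕ} {A B : Matrix (Fin d) (Fin d) ℂ}
    (h : ∀ w : Fin d → ℂ, A.mulVec w = B.mulVec w) : A = B := by
  ext i j
  have := congrFun (h (Pi.single j 1)) i
  simpa using this

/-- Two hermitian idempotents with the same fixed vectors are equal. -/
lemma proj_eq' {d : ℕ} (P Q : Matrix (Fin d) (Fin d) ℂ)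
    (hP2 : P * P = P) (hPH : Pᴴ = P) (hQ2 : Q * Q = Q) (hQH : Qᴴ = Q)
    (hfix : ∀ w : Fin d → ℂ, P.mulVec w = w ↔ Q.mulVec w = w) : P = Q := by
  have hPQ : P * Q = Q := mat_ext' fun w => by
    rw [← Matrix.mulVec_mulVec]
    have h1 : Q.mulVec (Q.mulVec w) = Q.mulVec w := by
      rw [Matrix.mulVec_mulVec, hQ2]
    rw [(hfix _).mpr h1]
  have hQP : Q * P = P := mat_ext' fun w => by
    rw [← Matrix.mulVec_mulVec]
    have h1 : P.mulVec (P.mulVec w) = P.mulVec w := by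
      rw [Matrix.mulVec_mulVec, hP2]
    rw [(hfix _).mp h1]
  calc P = Q * P := hQP.symm
    _ = (Pᴴ * Qᴴ)ᴴ := by
        rw [Matrix.conjTranspose_mul, Matrix.conjTranspose_conjTranspose,
          Matrix.conjTranspose_conjTranspose]
    _ = (P * Q)ᴴ := by rw [hPH, hQH]
    _ = Qᴴ := by rw [hPQ]
    _ = Q := hQH

open scoped ComplexOrder in
/-- eigenvectors of a normal matrix are eigenvectors of the adjoint. -/
lemma adj_eig' {d : ℕ} (A : Matrix (Fin d) (Fin d) ℂ) (hn : A * Aᴴ = Aᴴ * A)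
    {μ : ℂ} {v : Fin d → ℂ} (hv : A.mulVec v = μ • v) :
    Aᴴ.mulVec v = (star μ) • v := by
  set C : Matrix (Fin d) (Fin d) ℂ := A - μ • 1 with hC
  have hCH : Cᴴ = Aᴴ - (star μ) • 1 := by
    simp [hC, Matrix.conjTranspose_smul]
  have hCn : C * Cᴴ = Cᴴ * C := by
    rw [hCH, hC]
    simp only [Matrix.sub_mul, Matrix.mul_sub, Matrix.smul_mul, Matrix.mul_smul,
      Matrix.one_mul, Matrix.mul_one, smul_smul, hn, smul_sub]
    rw [mul_comm μ (star μ)]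
    abel
  have hCv : C.mulVec v = 0 := by
    rw [hC, Matrix.sub_mulVec, Matrix.smul_mulVec, Matrix.one_mulVec, hv, sub_self]
  have hw : star (Cᴴ.mulVec v) ⬝ᵥ (Cᴴ.mulVec v) = 0 := by
    rw [Matrix.star_mulVec, Matrix.conjTranspose_conjTranspose,
      ← Matrix.dotProduct_mulVec, Matrix.mulVec_mulVec, hCn, ← Matrix.mulVec_mulVec,
      hCv, Matrix.mulVec_zero, dotProduct_zero]
  have h0 : Cᴴ.mulVec v = 0 := dotProduct_star_self_eq_zero.mp hw
  rw [hCH, Matrix.sub_mulVec, Matrix.smul_mulVec, Matrix.one_mulVec] at h0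
  exact sub_eq_zero.mp h0

/-- Key analytic lemma: if all eigenvalues of `B` are dominated by `lam`,
then `lam^{-m} B^m → 0` entrywise. -/
lemma key_tendsto' {d : ℕ} (B : Matrix (Fin d) (Fin d) ℂ) (lam : ℂ) (hlam0 : lam ≠ 0)
    (hB : ∀ μ : ℂ, HasEigen B μ → ‖μ‖ < ‖lam‖) (i j : Fin d) :
    Tendsto (fun m : ℕ => ((lam ^ m)⁻¹ • B ^ m) i j) atTop (nhds 0) := by
  classical
  letI instN : NormedRing (Matrix (Fin d) (Fin d) ℂ) := Matrix.linftyOpNormedRing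
  letI instA : NormedAlgebra ℂ (Matrix (Fin d) (Fin d) ℂ) := Matrix.linftyOpNormedAlgebra
  letI instC : @CompleteSpace (Matrix (Fin d) (Fin d) ℂ) instN.toUniformSpace :=
    FiniteDimensional.complete ℂ _
  haveI : Nonempty (Fin d) := ⟨i⟩
  haveI : Nontrivial (Matrix (Fin d) (Fin d) ℂ) :=
    ⟨0, 1, fun h => by simpa using congrFun (congrFun h i) i⟩
  have hspec : ∀ z ∈ spectrum ℂ B, ‖z‖₊ < ‖lam‖₊ := by
    intro z hz
    rw [spectrum.mem_iff] at hz
    have hdet : (algebraMap ℂ (Matrix (Fin d) (Fin d) ℂ) z - B).det = 0 := by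
      by_contra h
      exact hz ((Matrix.isUnit_iff_isUnit_det _).mpr (isUnit_iff_ne_zero.mpr h))
    obtain ⟨v, hv0, hv⟩ := (Matrix.exists_mulVec_eq_zero_iff).mpr hdet
    rw [Algebra.algebraMap_eq_smul_one, Matrix.sub_mulVec, Matrix.smul_mulVec,
      Matrix.one_mulVec] at hv
    have hzeig : B.mulVec v = z • v := (sub_eq_zero.mp hv).symm
    have := hB z ⟨v, hv0, hzeig⟩
    rw [← NNReal.coe_lt_coe]
    simpa using this
  have hrad : spectralRadius ℂ B < (‖lam‖₊ : ℝ≥0∞) :=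
    spectrum.spectralRadius_lt_of_forall_lt B hspec
  obtain ⟨r, hr1, hr2⟩ := ENNReal.lt_iff_exists_nnreal_btwn.mp hrad
  have hglt : ∀ᶠ n : ℕ in atTop, (‖B ^ n‖₊ : ℝ≥0∞) ^ (1 / (n : ℝ)) < (r : ℝ≥0∞) :=
    (spectrum.pow_nnnorm_pow_one_div_tendsto_nhds_spectralRadius B).eventually_lt_const hr1
  have hbound : ∀ᶠ n in atTop, ‖B ^ n‖₊ ≤ r ^ n := by
    filter_upwards [hglt, eventually_ge_atTop 1] with n hn hn1
    have hn0 : (n : ℝ) ≠ 0 := Nat.cast_ne_zero.mpr (by omega)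
    have h1 : ((‖B ^ n‖₊ : ℝ≥0∞) ^ (1 / (n : ℝ))) ^ (n : ℝ) ≤ (r : ℝ≥0∞) ^ (n : ℝ) :=
      ENNReal.rpow_le_rpow hn.le (Nat.cast_nonneg n)
    rw [← ENNReal.rpow_mul, one_div, inv_mul_cancel₀ hn0, ENNReal.rpow_one,
      ENNReal.rpow_natCast] at h1
    exact_mod_cast h1
  have hlamnorm : (0 : ℝ) < ‖lam‖ := norm_pos_iff.mpr hlam0
  have hrlt : (r : ℝ) < ‖lam‖ := by
    rw [ENNReal.coe_lt_coe, ← NNReal.coe_lt_coe] at hr2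
    simpa using hr2
  set c : ℝ := (r : ℝ) / ‖lam‖ with hc
  have hc0 : (0 : ℝ) ≤ c := div_nonneg r.coe_nonneg hlamnorm.le
  have hc1 : c < 1 := (div_lt_one hlamnorm).mpr hrlt
  rw [tendsto_zero_iff_norm_tendsto_zero]
  apply squeeze_zero' (Eventually.of_forall fun m => norm_nonneg _) ?_
    (tendsto_pow_atTop_nhds_zero_of_lt_one hc0 hc1)
  filter_upwards [hbound] with m hm
  have hentry : ‖(B ^ m) i j‖₊ ≤ ‖B ^ m‖₊ := by
    refine le_trans (Finset.single_le_sum (f := fun k => ‖(B ^ m) i k‖₊)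
      (fun _ _ => zero_le) (Finset.mem_univ j)) ?_
    rw [Matrix.linfty_opNNNorm_def]
    simpa using Finset.le_sup (f := fun i => ∑ k, ‖(B ^ m) i k‖₊) (Finset.mem_univ i)
  have hentry' : ‖(B ^ m) i j‖ ≤ (r : ℝ) ^ m := by
    have := le_trans hentry hm
    rw [← NNReal.coe_le_coe] at this
    simpa using this
  have hval : ‖((lam ^ m)⁻¹ • B ^ m) i j‖ = ‖lam‖⁻¹ ^ m * ‖(B ^ m) i j‖ := by
    simp [Matrix.smul_apply, norm_mul, norm_inv, norm_pow, inv_pow]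
  rw [hval, hc, div_pow]
  rw [div_eq_mul_inv, mul_comm ((r:ℝ)^m), ← inv_pow]
  exact mul_le_mul_of_nonneg_left hentry' (by positivity)

/-- The renormalized measurement operator
    `lam⁻²ᵐ·[cos(Θ/2)·(σ_x ⊗ azᵐ ax azᵐ) − sin(Θ/2)·(σ_y ⊗ azᵐ ay azᵐ)]`
    converges to the nonzero product operator `U_Θ ⊗ (P·ax·P)`. -/
theorem renormalized_measurement_convergence {d : ℕ}
    (az P U ax : Matrix (Fin d) (Fin d) ℂ) (lam : ℂ)
    (hnormal : IsStarNormal az)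
    (hlam0 : lam ≠ 0) (hlam : HasEigen az lam)
    (hdom : ∀ μ : ℂ, HasEigen az μ → μ ≠ lam → ‖μ‖ < ‖lam‖)
    (hP2 : P * P = P) (hPH : Pᴴ = P) (hrank : P.rank = 1)
    (hPrange : ∀ v : Fin d → ℂ, az.mulVec v = lam • v ↔ P.mulVec v = v)
    (hU : Uᴴ * U = 1) (hU' : U * Uᴴ = 1)
    (hUaz : U * az * Uᴴ = az)
    (hax : P * ax * P ≠ 0)
    (ay : Matrix (Fin d) (Fin d) ℂ) (hay : ay = U * ax * Uᴴ)
    (Θ : ℝ) :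
    Tendsto (fun m : ℕ => (lam ^ (2 * m))⁻¹ •
        ((Real.cos (Θ / 2) : ℂ) • (σx ⊗ₖ (az ^ m * ax * az ^ m))
          - (Real.sin (Θ / 2) : ℂ) • (σy ⊗ₖ (az ^ m * ay * az ^ m))))
      atTop (nhds (UΘ Θ ⊗ₖ (P * ax * P)))
    ∧ UΘ Θ ⊗ₖ (P * ax * P) ≠ 0 := by
  obtain ⟨v, hv0, hvz⟩ := hlam
  have hPv : P.mulVec v = v := (hPrange v).mp hvz
  -- normality as a matrix equation
  have hn' : az * azᴴ = azᴴ * az := by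
    have h := hnormal.star_comm_self
    rw [Matrix.star_eq_conjTranspose] at h
    exact h.symm
  -- az * P = lam • P
  have hfixP : ∀ w : Fin d → ℂ, az.mulVec (P.mulVec w) = lam • P.mulVec w := by
    intro w
    refine (hPrange (P.mulVec w)).mpr ?_
    rw [Matrix.mulVec_mulVec, hP2]
  have haP : az * P = lam • P := mat_ext' fun w => by
    rw [← Matrix.mulVec_mulVec, hfixP w, Matrix.smul_mulVec]
  -- azᴴ * P = star lam • P
  have haPadj : azᴴ * P = (star lam) • P := mat_ext' fun w => by
    rw [← Matrix.mulVec_mulVec, adj_eig' az hn' (hfixP w), Matrix.smul_mulVec]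
  -- P * az = lam • P
  have hPa : P * az = lam • P := by
    have h := congrArg Matrix.conjTranspose haPadj
    rwa [Matrix.conjTranspose_mul, Matrix.conjTranspose_conjTranspose, hPH,
      Matrix.conjTranspose_smul, star_star, hPH] at h
  -- the remainder B
  set B : Matrix (Fin d) (Fin d) ℂ := az - lam • P with hBdef
  have haz : az = lam • P + B := by rw [hBdef]; abel
  have hBP : B * P = 0 := by
    rw [hBdef, Matrix.sub_mul, haP, Matrix.smul_mul, hP2, sub_self]
  have hPB : P * B = 0 := by
    rw [hBdef, Matrix.mul_sub, hPa, Matrix.mul_smul, hP2, sub_self]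
  have hBkP : ∀ k : ℕ, B ^ (k + 1) * P = 0 := by
    intro k
    rw [pow_succ, mul_assoc, hBP, mul_zero]
  have hpow : ∀ m : ℕ, az ^ (m + 1) = lam ^ (m + 1) • P + B ^ (m + 1) := by
    intro m
    induction m with
    | zero => simpa using haz
    | succ k ih =>
      calc az ^ (k + 1 + 1) = (lam ^ (k + 1) • P + B ^ (k + 1)) * (lam • P + B) := by
            rw [pow_succ, ih, ← haz]
        _ = (lam ^ (k + 1) * lam) • (P * P) + lam ^ (k + 1) • (P * B)
              + lam • (B ^ (k + 1) * P) + B ^ (k + 1) * B := by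
            simp only [Matrix.add_mul, Matrix.mul_add, smul_mul_assoc, mul_smul_comm,
              smul_smul, smul_add, mul_comm]
            abel
        _ = lam ^ (k + 1 + 1) • P + B ^ (k + 1 + 1) := by
            rw [hP2, hPB, hBkP k, ← pow_succ, ← pow_succ]
            simp
  -- eigenvalue bound for B
  have hBeig : ∀ μ : ℂ, HasEigen B μ → ‖μ‖ < ‖lam‖ := by
    rintro μ ⟨w, hw0, hw⟩
    rcases eq_or_ne μ 0 with rfl | hμ0
    · simpa using norm_pos_iff.mpr hlam0
    · have hPw : P.mulVec w = 0 := by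
        have h1 : P.mulVec (B.mulVec w) = 0 := by
          rw [Matrix.mulVec_mulVec, hPB, Matrix.zero_mulVec]
        rw [hw, Matrix.mulVec_smul] at h1
        exact (smul_eq_zero.mp h1).resolve_left hμ0
      have hazw : az.mulVec w = μ • w := by
        rw [haz, Matrix.add_mulVec, Matrix.smul_mulVec, hPw, smul_zero, zero_add, hw]
      have hne : μ ≠ lam := by
        rintro rfl
        exact hw0 (by rw [← (hPrange w).mp hazw, hPw])
      exact hdom μ ⟨w, hw0, hazw⟩ hne
  -- the error terms
  set f : ℕ → Matrix (Fin d) (Fin d) ℂ := fun m => (lam ^ m)⁻¹ • B ^ m with hf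
  have hfM : Tendsto f atTop (nhds 0) := by
    refine tendsto_pi_nhds.mpr ?_
    intro i
    refine tendsto_pi_nhds.mpr ?_
    intro j
    exact key_tendsto' B lam hlam0 hBeig i j
  have hazm : ∀ m : ℕ, 1 ≤ m → az ^ m = lam ^ m • (P + f m) := by
    intro m hm
    obtain ⟨k, rfl⟩ : ∃ k, m = k + 1 := ⟨m - 1, by omega⟩
    rw [hpow k, smul_add, hf]
    congr 1
    rw [smul_smul, mul_inv_cancel₀ (pow_ne_zero _ hlam0), one_smul]
  -- U commutes with P
  have hUcomm : U * az = az * U := by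
    have h := congrArg (· * U) hUaz
    simpa only [mul_assoc, hU, mul_one] using h
  have hUinj : ∀ u w : Fin d → ℂ, U.mulVec u = U.mulVec w → u = w := by
    intro u w h
    have h1 := congrArg (Uᴴ.mulVec ·) h
    simpa only [Matrix.mulVec_mulVec, hU, Matrix.one_mulVec] using h1
  have hfix : ∀ w : Fin d → ℂ, P.mulVec w = w ↔ (Uᴴ * P * U).mulVec w = w := by
    intro w
    have hUw : az.mulVec (U.mulVec w) = lam • (U.mulVec w) ↔ az.mulVec w = lam • w := by
      constructor
      · intro h
        apply hUinj
        rw [Matrix.mulVec_mulVec, hUcomm, ← Matrix.mulVec_mulVec, h, Matrix.mulVec_smul]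
      · intro h
        rw [Matrix.mulVec_mulVec, ← hUcomm, ← Matrix.mulVec_mulVec, h, Matrix.mulVec_smul]
    constructor
    · intro h
      have h1 : az.mulVec w = lam • w := (hPrange w).mpr h
      have h2 : P.mulVec (U.mulVec w) = U.mulVec w := (hPrange _).mp (hUw.mpr h1)
      calc (Uᴴ * P * U).mulVec w = Uᴴ.mulVec (P.mulVec (U.mulVec w)) := by
            rw [Matrix.mulVec_mulVec, Matrix.mulVec_mulVec]
        _ = Uᴴ.mulVec (U.mulVec w) := by rw [h2]
        _ = w := by rw [Matrix.mulVec_mulVec, hU, Matrix.one_mulVec]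
    · intro h
      have h2 : P.mulVec (U.mulVec w) = U.mulVec w := by
        have h3 := congrArg (U.mulVec ·) h
        rw [Matrix.mulVec_mulVec, ← mul_assoc, ← mul_assoc, hU', one_mul,
          ← Matrix.mulVec_mulVec] at h3
        exact h3
      have h1 : az.mulVec (U.mulVec w) = lam • U.mulVec w := (hPrange _).mpr h2
      exact (hPrange w).mp (hUw.mp h1)
  have hQ2 : (Uᴴ * P * U) * (Uᴴ * P * U) = Uᴴ * P * U := by
    have e1 : U * (Uᴴ * (P * U)) = P * U := by rw [← mul_assoc, hU', one_mul]
    simp only [mul_assoc]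
    rw [e1, ← mul_assoc P P U, hP2]
  have hQH : (Uᴴ * P * U)ᴴ = Uᴴ * P * U := by
    simp [Matrix.conjTranspose_mul, Matrix.conjTranspose_conjTranspose, hPH, mul_assoc]
  have hPQ : P = Uᴴ * P * U := proj_eq' P (Uᴴ * P * U) hP2 hPH hQ2 hQH hfix
  have hUP : U * P = P * U := by
    conv_lhs => rw [hPQ]
    rw [← mul_assoc, ← mul_assoc, hU', one_mul]
  have hPUH : P * Uᴴ = Uᴴ * P := by
    have h := congrArg Matrix.conjTranspose hUP
    rwa [Matrix.conjTranspose_mul, Matrix.conjTranspose_mul, hPH] at h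
  -- P * ax * P is a scalar multiple of P
  have hspan : ∀ w : Fin d → ℂ, ∃ cc : ℂ, P.mulVec w = cc • v := by
    have hvmem : v ∈ LinearMap.range P.mulVecLin := ⟨v, by simpa using hPv⟩
    have hle : (ℂ ∙ v) ≤ LinearMap.range P.mulVecLin :=
      (Submodule.span_singleton_le_iff_mem _ _).mpr hvmem
    have heq : (ℂ ∙ v) = LinearMap.range P.mulVecLin := by
      refine Submodule.eq_of_le_of_finrank_le hle ?_
      rw [finrank_span_singleton hv0]
      exact le_of_eq hrank
    intro w
    have hmem : P.mulVec w ∈ (ℂ ∙ v) := by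
      rw [heq]
      exact ⟨w, by simp⟩
    obtain ⟨cc, hcc⟩ := Submodule.mem_span_singleton.mp hmem
    exact ⟨cc, hcc.symm⟩
  obtain ⟨β, hβ⟩ := hspan (ax.mulVec v)
  have hPaxP : P * ax * P = β • P := mat_ext' fun w => by
    obtain ⟨cw, hcw⟩ := hspan w
    calc (P * ax * P).mulVec w = P.mulVec (ax.mulVec (P.mulVec w)) := by
          rw [Matrix.mulVec_mulVec, Matrix.mulVec_mulVec]
      _ = cw • (P.mulVec (ax.mulVec v)) := by rw [hcw, Matrix.mulVec_smul, Matrix.mulVec_smul]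
      _ = cw • (β • v) := by rw [hβ]
      _ = β • (cw • v) := smul_comm _ _ _
      _ = β • (P.mulVec w) := by rw [hcw]
      _ = (β • P).mulVec w := (Matrix.smul_mulVec _ _ _).symm
  have hPay : P * ay * P = P * ax * P := by
    rw [hay]
    calc P * (U * ax * Uᴴ) * P = (P * U) * ax * (Uᴴ * P) := by
          simp only [mul_assoc]
      _ = (U * P) * ax * (P * Uᴴ) := by rw [← hUP, ← hPUH]
      _ = U * (P * ax * P) * Uᴴ := by simp only [mul_assoc]
      _ = U * (β • P) * Uᴴ := by rw [hPaxP]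
      _ = β • (U * P * Uᴴ) := by rw [mul_smul_comm, smul_mul_assoc]
      _ = β • (P * (U * Uᴴ)) := by rw [hUP, mul_assoc]
      _ = β • P := by rw [hU', mul_one]
      _ = P * ax * P := hPaxP.symm
  -- the UΘ identity
  set cc : ℂ := (Real.cos (Θ / 2) : ℂ) with hcc
  set ss : ℂ := (Real.sin (Θ / 2) : ℂ) with hss
  have hUΘ : UΘ Θ = cc • σx - ss • σy := by
    ext i j
    fin_cases i <;> fin_cases j <;>
      simp [UΘ, σx, σy, σz, Matrix.mul_apply, Fin.sum_univ_two, hcc, hss] <;> ring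
  have hkr : ∀ M : Matrix (Fin d) (Fin d) ℂ,
      UΘ Θ ⊗ₖ M = cc • (σx ⊗ₖ M) - ss • (σy ⊗ₖ M) := by
    intro M
    ext i j
    simp [hUΘ, Matrix.kroneckerMap_apply, Matrix.sub_apply, Matrix.smul_apply,
      smul_eq_mul, sub_mul, mul_assoc]
  -- nonzero part
  have hne : UΘ Θ ⊗ₖ (P * ax * P) ≠ 0 := by
    obtain ⟨i, j, hij⟩ : ∃ i j, (P * ax * P) i j ≠ 0 := by
      by_contra h
      push_neg at h
      exact hax (by ext i j; simpa using h i j)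
    intro h0
    have h1 := congrFun (congrFun h0 (0, i)) (1, j)
    have h2 : (UΘ Θ) 0 1 * (P * ax * P) i j = 0 := by
      simpa [Matrix.kroneckerMap_apply] using h1
    have h3 : (UΘ Θ) 0 1 = cc + ss * Complex.I := by
      simp [hUΘ, σx, σy, hcc, hss]
      try ring
    have h4 : cc + ss * Complex.I ≠ 0 := by
      intro h
      have hre : Real.cos (Θ / 2) = 0 := by
        have h5 := congrArg Complex.re h
        simpa only [hcc, hss, Complex.add_re, Complex.ofReal_re, Complex.mul_re,
          Complex.ofReal_im, Complex.I_re, Complex.I_im, mul_zero, mul_one, zero_mul,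
          sub_zero, zero_sub, add_zero, zero_add, neg_zero, Complex.zero_re] using h5
      have him : Real.sin (Θ / 2) = 0 := by
        have h5 := congrArg Complex.im h
        simpa only [hcc, hss, Complex.add_im, Complex.ofReal_re, Complex.mul_im,
          Complex.ofReal_im, Complex.I_re, Complex.I_im, mul_zero, mul_one, zero_mul,
          sub_zero, zero_sub, add_zero, zero_add, neg_zero, Complex.zero_im] using h5
      nlinarith [Real.sin_sq_add_cos_sq (Θ / 2)]
    rw [h3] at h2
    exact hij ((mul_eq_zero.mp h2).resolve_left h4)
  refine ⟨?_, hne⟩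
  -- the convergence part
  have hcont : ∀ (A : Matrix (Fin 2) (Fin 2) ℂ) (b : Matrix (Fin d) (Fin d) ℂ),
      Continuous fun X : Matrix (Fin d) (Fin d) ℂ => A ⊗ₖ ((P + X) * b * (P + X)) := by
    intro A b
    have h1 : Continuous fun X : Matrix (Fin d) (Fin d) ℂ => (P + X) * b * (P + X) :=
      ((continuous_const.add continuous_id).matrix_mul continuous_const).matrix_mul
        (continuous_const.add continuous_id)
    apply continuous_pi
    intro i
    apply continuous_pi
    intro j
    simp only [Matrix.kroneckerMap_apply]
    exact continuous_const.mul (h1.matrix_elem i.2 j.2)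
  have hg : Continuous fun X : Matrix (Fin d) (Fin d) ℂ =>
      cc • (σx ⊗ₖ ((P + X) * ax * (P + X))) - ss • (σy ⊗ₖ ((P + X) * ay * (P + X))) :=
    ((hcont σx ax).const_smul cc).sub ((hcont σy ay).const_smul ss)
  have htd : Tendsto (fun m : ℕ =>
      cc • (σx ⊗ₖ ((P + f m) * ax * (P + f m))) - ss • (σy ⊗ₖ ((P + f m) * ay * (P + f m))))
      atTop (nhds (cc • (σx ⊗ₖ ((P + 0) * ax * (P + 0))) - ss • (σy ⊗ₖ ((P + 0) * ay * (P + 0))))) :=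
    (hg.tendsto 0).comp hfM
  have hval : cc • (σx ⊗ₖ ((P + 0) * ax * (P + 0))) - ss • (σy ⊗ₖ ((P + 0) * ay * (P + 0)))
      = UΘ Θ ⊗ₖ (P * ax * P) := by
    rw [add_zero, hPay, hkr]
  rw [hval] at htd
  refine htd.congr' ?_
  filter_upwards [eventually_ge_atTop 1] with m hm
  have hlam2m : lam ^ (2 * m) ≠ 0 := pow_ne_zero _ hlam0
  have hmul : ∀ b : Matrix (Fin d) (Fin d) ℂ,
      az ^ m * b * az ^ m = lam ^ (2 * m) • ((P + f m) * b * (P + f m)) := by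
    intro b
    rw [hazm m hm, smul_mul_assoc, mul_smul_comm, smul_mul_assoc, smul_smul,
      ← pow_add, two_mul]
  rw [hmul ax, hmul ay, Matrix.kronecker_smul, Matrix.kronecker_smul,
    smul_comm cc, smul_comm ss, ← smul_sub, smul_smul,
    inv_mul_cancel₀ hlam2m, one_smul]

end
end
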